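/- Suppose for each i = 1, …, N an independent random subgraph Z_i of G satisfies: for every set F of at most k−1 edges and every terminal t ∈ T, Pr[Z_i \ F contains an r→t path] ≥ q. If N ≥ (2k ln n)/q where n ≥ max(|E(G)|², |T|) (meaning |E(G)|^{k−1}·|T| ≤ n^{2k−1}), then with probability at least 1 − n^{−1}, the union H = ∪_i Z_i contains, for every terminal t and every set F of k−1 edges, an r→t path avoiding F; hence H has k edge-disjoint r→t paths for every t ∈ T. -/

import Mathlib

open scoped Classical
set_option linter.unusedSectionVars false
set_option maxHeartbeats 1000000

/-- The list of directed edges traversed by a list of vertices. -/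
def pathEdges {V : Type*} (p : List V) : List (V × V) := p.zip p.tail

/-- `p` is a simple directed path in the edge set `E` starting at `s`. -/
def IsRPath {V : Type*} (E : Finset (V × V)) (s : V) (p : List V) : Prop :=
  p.Nodup ∧ p.Chain' (fun u v => (u, v) ∈ E) ∧ p.head? = some s

/-- `p` is a simple directed path in `E` from `s` to `t`. -/
def IsRPathTo {V : Type*} (E : Finset (V × V)) (s t : V) (p : List V) : Prop :=
  IsRPath E s p ∧ p.getLast? = some t

/-- `E` contains `k` pairwise edge-disjoint directed `s`→`t` paths. -/
def HasKPaths {V : Type*} (E : Finset (V × V)) (s t : V) (k : ℕ) : Prop :=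
  ∃ P : Fin k → List V, (∀ i, IsRPathTo E s t (P i)) ∧
    ∀ i j, i ≠ j → ∀ e, e ∈ pathEdges (P i) → e ∉ pathEdges (P j)

/-- In-degree of a vertex `v` in the edge set `E`. -/
def inDeg {V : Type*} [DecidableEq V] (E : Finset (V × V)) (v : V) : ℕ :=
  (E.filter (fun e => e.2 = v)).card

/-- In-degree of a vertex set `S`: number of edges entering `S` from outside. -/
def inDegS {V : Type*} [DecidableEq V] (E : Finset (V × V)) (S : Finset V) : ℕ :=
  (E.filter (fun e => e.1 ∉ S ∧ e.2 ∈ S)).card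

/-- The maximum number of pairwise edge-disjoint `s→v` paths in `E`. -/
noncomputable def maxConn {V : Type*} (E : Finset (V × V)) (s v : V) : ℕ :=
  sSup {m : ℕ | HasKPaths E s v m}

open MeasureTheory

namespace KConn
variable {V : Type*} [DecidableEq V]

def outDeg (E : Finset (V × V)) (v : V) : ℕ :=
  (E.filter (fun e => e.1 = v)).card

@[simp] lemma pathEdges_nil : pathEdges ([] : List V) = [] := rfl
@[simp] lemma pathEdges_single (a : V) : pathEdges [a] = [] := rfl
@[simp] lemma pathEdges_cons2 (a b : V) (l : List V) :
    pathEdges (a :: b :: l) = (a, b) :: pathEdges (b :: l) := rfl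

lemma map_fst_pathEdges : ∀ (l : List V), (pathEdges l).map Prod.fst = l.dropLast
  | [] => rfl
  | [_] => rfl
  | a :: b :: l => by
    simp only [pathEdges_cons2, List.map_cons, map_fst_pathEdges (b :: l)]
    rfl

lemma map_snd_pathEdges : ∀ (l : List V), (pathEdges l).map Prod.snd = l.tail
  | [] => rfl
  | [_] => rfl
  | a :: b :: l => by
    simp only [pathEdges_cons2, List.map_cons, map_snd_pathEdges (b :: l)]
    rfl

lemma mem_of_chain' {E : Finset (V × V)} :
    ∀ {l : List V}, l.Chain' (fun u v => (u, v) ∈ E) →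
      ∀ e ∈ pathEdges l, e ∈ E
  | [], _, e, he => by simp at he
  | [_], _, e, he => by simp at he
  | a :: b :: l, h, e, he => by
    simp only [List.Chain'] at h
    rw [List.isChain_cons_cons] at h
    rcases List.mem_cons.1 he with he | he
    · exact he ▸ h.1
    · exact mem_of_chain' h.2 e he

lemma chain'_of_forall {E : Finset (V × V)} :
    ∀ {l : List V}, (∀ e ∈ pathEdges l, e ∈ E) →
      l.Chain' (fun u v => (u, v) ∈ E)
  | [], _ => List.isChain_nil
  | [_], _ => List.isChain_singleton _
  | a :: b :: l, h => by
    simp only [List.Chain']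
    rw [List.isChain_cons_cons]
    exact ⟨h (a, b) (by simp), chain'_of_forall (fun e he => h e (by simp [he]))⟩

lemma pathEdges_nodup {l : List V} (h : l.Nodup) : (pathEdges l).Nodup := by
  have := (h.sublist l.dropLast_sublist)
  rw [← map_fst_pathEdges] at this
  exact this.of_map _

lemma _root_.IsRPathTo.mono {E E' : Finset (V × V)} {s t : V} {p : List V}
    (hEE : E ⊆ E') (h : IsRPathTo E s t p) : IsRPathTo E' s t p :=
  ⟨⟨h.1.1, h.1.2.1.imp (fun {a b} hab => hEE hab), h.1.2.2⟩, h.2⟩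

lemma mem_dropLast_of_mem {l : List V} {v : V} (h : v ∈ l)
    (hne : l.getLast? ≠ some v) : v ∈ l.dropLast := by
  have hnil : l ≠ [] := by rintro rfl; simp at h
  have := l.dropLast_append_getLast hnil
  rw [← this] at h
  rcases List.mem_append.1 h with h' | h'
  · exact h'
  · simp only [List.mem_singleton] at h'
    exact absurd (by rw [h', List.getLast?_eq_getLast hnil]) hne

lemma mem_tail_of_mem {l : List V} {v : V} (h : v ∈ l)
    (hne : l.head? ≠ some v) : v ∈ l.tail := by
  cases l with
  | nil => simp at h
  | cons a l' =>
    rcases List.mem_cons.1 h with rfl | h'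
    · simp at hne
    · exact h'

lemma not_mem_dropLast {l : List V} {v : V} (hn : l.Nodup)
    (hv : l.getLast? = some v) : v ∉ l.dropLast := by
  have hnil : l ≠ [] := by rintro rfl; simp at hv
  have heq := l.dropLast_append_getLast hnil
  rw [List.getLast?_eq_getLast hnil, Option.some_inj] at hv
  rw [← heq] at hn
  have := List.disjoint_of_nodup_append hn
  intro hmem
  exact this hmem (by simp [hv])

lemma not_mem_tail {l : List V} {v : V} (hn : l.Nodup)
    (hv : l.head? = some v) : v ∉ l.tail := by
  cases l with
  | nil => simp at hv
  | cons a l' =>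
    simp only [List.head?_cons, Option.some_inj] at hv
    subst hv
    exact (List.nodup_cons.1 hn).1

-- generic filter-card lemmas
lemma filter_card_sdiff (p : V × V → Prop) [DecidablePred p]
    {A B : Finset (V × V)} (h : A ⊆ B) :
    ((B \ A).filter p).card = (B.filter p).card - (A.filter p).card := by
  have : (B \ A).filter p = B.filter p \ A.filter p := by
    ext e; simp only [Finset.mem_filter, Finset.mem_sdiff]; tauto
  rw [this, Finset.card_sdiff_of_subset (Finset.filter_subset_filter p h)]

lemma filter_card_union (p : V × V → Prop) [DecidablePred p]
    {A B : Finset (V × V)} (h : Disjoint A B) :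
    ((A ∪ B).filter p).card = (A.filter p).card + (B.filter p).card := by
  rw [Finset.filter_union, Finset.card_union_of_disjoint
    (Finset.disjoint_filter_filter h)]

lemma outDeg_sdiff {A B : Finset (V × V)} (h : A ⊆ B) (v : V) :
    outDeg (B \ A) v = outDeg B v - outDeg A v := filter_card_sdiff _ h

lemma inDeg_sdiff {A B : Finset (V × V)} (h : A ⊆ B) (v : V) :
    inDeg (B \ A) v = inDeg B v - inDeg A v := filter_card_sdiff _ h

lemma outDeg_union {A B : Finset (V × V)} (h : Disjoint A B) (v : V) :
    outDeg (A ∪ B) v = outDeg A v + outDeg B v := filter_card_union _ h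

lemma inDeg_union {A B : Finset (V × V)} (h : Disjoint A B) (v : V) :
    inDeg (A ∪ B) v = inDeg A v + inDeg B v := filter_card_union _ h

lemma outDeg_le {A B : Finset (V × V)} (h : A ⊆ B) (v : V) :
    outDeg A v ≤ outDeg B v :=
  Finset.card_le_card (Finset.filter_subset_filter _ h)

lemma inDeg_le {A B : Finset (V × V)} (h : A ⊆ B) (v : V) :
    inDeg A v ≤ inDeg B v :=
  Finset.card_le_card (Finset.filter_subset_filter _ h)

-- singleton filter lemmas for nodup-projection lists
lemma filter_fst_singleton {L : List (V × V)} (hL : (L.map Prod.fst).Nodup)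
    {e : V × V} (he : e ∈ L) :
    L.toFinset.filter (fun x => x.1 = e.1) = {e} := by
  apply Finset.eq_singleton_iff_unique_mem.2
  constructor
  · exact Finset.mem_filter.2 ⟨List.mem_toFinset.2 he, rfl⟩
  · intro x hx
    simp only [Finset.mem_filter, List.mem_toFinset] at hx
    exact List.inj_on_of_nodup_map hL hx.1 he hx.2

lemma filter_fst_empty {L : List (V × V)} {v : V} (h : v ∉ L.map Prod.fst) :
    L.toFinset.filter (fun x => x.1 = v) = ∅ := by
  apply Finset.filter_eq_empty_iff.2
  intro x hx hxv
  exact h (List.mem_map.2 ⟨x, List.mem_toFinset.1 hx, hxv⟩)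

lemma filter_snd_singleton {L : List (V × V)} (hL : (L.map Prod.snd).Nodup)
    {e : V × V} (he : e ∈ L) :
    L.toFinset.filter (fun x => x.2 = e.2) = {e} := by
  apply Finset.eq_singleton_iff_unique_mem.2
  constructor
  · exact Finset.mem_filter.2 ⟨List.mem_toFinset.2 he, rfl⟩
  · intro x hx
    simp only [Finset.mem_filter, List.mem_toFinset] at hx
    exact List.inj_on_of_nodup_map hL hx.1 he hx.2

lemma filter_snd_empty {L : List (V × V)} {v : V} (h : v ∉ L.map Prod.snd) :
    L.toFinset.filter (fun x => x.2 = v) = ∅ := by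
  apply Finset.filter_eq_empty_iff.2
  intro x hx hxv
  exact h (List.mem_map.2 ⟨x, List.mem_toFinset.1 hx, hxv⟩)

end KConn

-- flows and path/cycle extraction
namespace KConn
variable {V : Type*} [DecidableEq V]

/-- `f` is a 0/1 flow of value `k` from `r` to `t` (conservation only). -/
def FlowVal (f : Finset (V × V)) (r t : V) (k : ℕ) : Prop :=
  (∀ v, v ≠ r → v ≠ t → outDeg f v = inDeg f v) ∧
  outDeg f r = inDeg f r + k ∧ inDeg f t = outDeg f t + k

lemma FlowVal.ne (f : Finset (V × V)) {r t : V} {k : ℕ} (h : FlowVal f r t k)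
    (hk : 1 ≤ k) : r ≠ t := by
  rintro rfl
  have h1 := h.2.1
  have h2 := h.2.2
  omega

/-- One step of path building: either we are done (path to `t` or a cycle), or
we can extend the current path. -/
lemma step_lemma (f : Finset (V × V)) (r t : V)
    (hcons : ∀ v, v ≠ r → v ≠ t → outDeg f v = inDeg f v)
    (hr : 1 ≤ outDeg f r)
    (p : List V) (hnd : p.Nodup) (hch : p.Chain' (fun u v => (u, v) ∈ f))
    (hhd : p.head? = some r) (hnt : t ∉ p) (hne : p ≠ []) :
    (∃ q, IsRPathTo f r t q) ∨
    (∃ (w : V) (c : List V), (w :: c).Nodup ∧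
      (w :: (c ++ [w])).Chain' (fun u v => (u, v) ∈ f)) ∨
    (∃ w, w ∉ p ∧ w ≠ t ∧ (p ++ [w]).Nodup ∧
      (p ++ [w]).Chain' (fun u v => (u, v) ∈ f) ∧ (p ++ [w]).head? = some r ∧
      t ∉ p ++ [w] ∧ p ++ [w] ≠ []) := by
  set u := p.getLast hne with hu
  have hulast : p.getLast? = some u := List.getLast?_eq_getLast hne
  have hup : u ∈ p := List.getLast_mem hne
  -- out-degree of u is at least 1
  have hout : 1 ≤ outDeg f u := by
    by_cases hur : u = r
    · exact hur ▸ hr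
    · -- u ≠ r, so p has length ≥ 2 and there is an edge into u
      have hut : u ≠ t := fun h => hnt (h ▸ hup)
      have hrev : p.reverse.head? = some u := by
        rw [List.head?_reverse]; exact hulast
      have hch' : p.reverse.Chain' (fun a b => (b, a) ∈ f) := by
        simp only [List.Chain']
        rw [List.isChain_reverse]
        exact hch.imp (fun {a b} hab => hab)
      obtain ⟨q, hq⟩ : ∃ q, p.reverse = u :: q := by
        cases hrl : p.reverse with
        | nil => rw [hrl] at hrev; simp at hrev
        | cons x q => rw [hrl] at hrev; simp at hrev; exact ⟨q, by rw [hrev]⟩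
      have hq_ne : q ≠ [] := by
        rintro rfl
        -- p.reverse = [u] means p = [u], so u = r
        have : p = [u] := by
          have := congrArg List.reverse hq
          simpa using this
        rw [this] at hhd; simp at hhd; exact hur hhd
      obtain ⟨a, q', rfl⟩ : ∃ a q', q = a :: q' := by
        cases q with
        | nil => exact absurd rfl hq_ne
        | cons a q' => exact ⟨a, q', rfl⟩
      rw [hq] at hch'
      simp only [List.Chain'] at hch'
      rw [List.isChain_cons_cons] at hch'
      have hin : 1 ≤ inDeg f u := by
        have : (a, u) ∈ f.filter (fun e => e.2 = u) :=
          Finset.mem_filter.2 ⟨hch'.1, rfl⟩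
        exact Finset.card_pos.2 ⟨_, this⟩
      rw [hcons u hur hut]; exact hin
  -- there is an edge (u, w) in f
  obtain ⟨e, he⟩ := Finset.card_pos.1 hout
  rw [Finset.mem_filter] at he
  obtain ⟨hef, heu⟩ := he
  set w := e.2 with hw
  have hew : (u, w) ∈ f := by rw [hw, ← heu]; exact hef
  by_cases hwt : w = t
  · -- found a path to t
    left
    refine ⟨p ++ [t], ⟨⟨?_, ?_, ?_⟩, ?_⟩⟩
    · exact List.Nodup.append hnd (List.nodup_singleton t)
        (by simp [List.disjoint_singleton]; exact hnt)
    · simp only [List.Chain']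
      rw [List.isChain_append]
      refine ⟨hch, List.isChain_singleton t, ?_⟩
      intro x hx y hy
      simp only [List.head?_cons, Option.mem_def, Option.some_inj] at hy
      rw [Option.mem_def, hulast, Option.some_inj] at hx
      subst hx; subst hy
      exact hwt ▸ hew
    · rw [List.head?_append_of_ne_nil _ hne]; exact hhd
    · simp
  · by_cases hwp : w ∈ p
    · -- found a cycle
      right; left
      obtain ⟨p1, p2, rfl⟩ := List.append_of_mem hwp
      have hnd2 : (w :: p2).Nodup := hnd.sublist (List.sublist_append_right p1 _)
      have hch2 : (w :: p2).Chain' (fun a b => (a, b) ∈ f) :=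
        (List.isChain_append.1 (by simpa [List.Chain'] using hch)).2.1
      have hlast2 : (w :: p2).getLast? = some u := by
        rw [← hulast, List.getLast?_append_of_ne_nil _ (by simp : (w :: p2) ≠ [])]
      refine ⟨w, p2, hnd2, ?_⟩
      have : (w :: (p2 ++ [w])) = (w :: p2) ++ [w] := by simp
      rw [this]
      simp only [List.Chain']
      rw [List.isChain_append]
      refine ⟨hch2, List.isChain_singleton w, ?_⟩
      intro x hx y hy
      simp only [List.head?_cons, Option.mem_def, Option.some_inj] at hy
      rw [Option.mem_def, hlast2, Option.some_inj] at hx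
      subst hx; subst hy; exact hew
    · -- extend
      right; right
      refine ⟨w, hwp, hwt, ?_, ?_, ?_, ?_, by simp⟩
      · exact List.Nodup.append hnd (List.nodup_singleton w)
          (by simp [List.disjoint_singleton]; exact hwp)
      · simp only [List.Chain']
        rw [List.isChain_append]
        refine ⟨hch, List.isChain_singleton w, ?_⟩
        intro x hx y hy
        simp only [List.head?_cons, Option.mem_def, Option.some_inj] at hy
        rw [Option.mem_def, hulast, Option.some_inj] at hx
        subst hx; subst hy; exact hew
      · rw [List.head?_append_of_ne_nil _ hne]; exact hhd
      · simp only [List.mem_append, List.mem_singleton]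
        rintro (h | h)
        · exact hnt h
        · exact hwt h.symm

/-- Path or cycle extraction from a flow with positive value. -/
lemma exists_path_or_cycle [Fintype V] (f : Finset (V × V)) (r t : V)
    (hcons : ∀ v, v ≠ r → v ≠ t → outDeg f v = inDeg f v)
    (hr : 1 ≤ outDeg f r) (hrt : r ≠ t) :
    (∃ q, IsRPathTo f r t q) ∨
    (∃ (w : V) (c : List V), (w :: c).Nodup ∧
      (w :: (c ++ [w])).Chain' (fun u v => (u, v) ∈ f)) := by
  suffices h : ∀ n (p : List V), p.Nodup → p.Chain' (fun u v => (u, v) ∈ f) →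
      p.head? = some r → t ∉ p → p ≠ [] → Fintype.card V ≤ p.length + n →
      (∃ q, IsRPathTo f r t q) ∨
      (∃ (w : V) (c : List V), (w :: c).Nodup ∧
        (w :: (c ++ [w])).Chain' (fun u v => (u, v) ∈ f)) by
    refine h (Fintype.card V) [r] (List.nodup_singleton r)
      (List.isChain_singleton r) rfl (by simpa using (Ne.symm hrt)) (by simp)
      (by simp)
  intro n
  induction n with
  | zero =>
    intro p hnd hch hhd hnt hne hcard
    rcases step_lemma f r t hcons hr p hnd hch hhd hnt hne with h | h | h
    · exact Or.inl h
    · exact Or.inr h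
    · exfalso
      obtain ⟨w, _, _, hnd', _, _, _, _⟩ := h
      have := List.Nodup.length_le_card hnd'
      simp only [List.length_append, List.length_singleton] at this
      omega
  | succ n ih =>
    intro p hnd hch hhd hnt hne hcard
    rcases step_lemma f r t hcons hr p hnd hch hhd hnt hne with h | h | h
    · exact Or.inl h
    · exact Or.inr h
    · obtain ⟨w, _, _, hnd', hch', hhd', hnt', hne'⟩ := h
      exact ih (p ++ [w]) hnd' hch' hhd' hnt' hne' (by simp; omega)

end KConn

-- removal lemmas and flow decomposition
namespace KConn
variable {V : Type*} [DecidableEq V]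

lemma outDeg_pathEdges {p : List V} (hnd : p.dropLast.Nodup) (v : V) :
    outDeg (pathEdges p).toFinset v = if v ∈ p.dropLast then 1 else 0 := by
  have hL : ((pathEdges p).map Prod.fst).Nodup := by
    rw [map_fst_pathEdges]; exact hnd
  by_cases h : v ∈ p.dropLast
  · rw [if_pos h]
    rw [← map_fst_pathEdges] at h
    obtain ⟨e, heL, rfl⟩ := List.mem_map.1 h
    unfold outDeg
    rw [filter_fst_singleton hL heL, Finset.card_singleton]
  · rw [if_neg h]
    rw [← map_fst_pathEdges] at h
    unfold outDeg
    rw [filter_fst_empty h, Finset.card_empty]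

lemma inDeg_pathEdges {p : List V} (hnd : p.tail.Nodup) (v : V) :
    inDeg (pathEdges p).toFinset v = if v ∈ p.tail then 1 else 0 := by
  have hL : ((pathEdges p).map Prod.snd).Nodup := by
    rw [map_snd_pathEdges]; exact hnd
  by_cases h : v ∈ p.tail
  · rw [if_pos h]
    rw [← map_snd_pathEdges] at h
    obtain ⟨e, heL, rfl⟩ := List.mem_map.1 h
    unfold inDeg
    rw [filter_snd_singleton hL heL, Finset.card_singleton]
  · rw [if_neg h]
    rw [← map_snd_pathEdges] at h
    unfold inDeg
    rw [filter_snd_empty h, Finset.card_empty]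

lemma remove_path {f : Finset (V × V)} {r t : V} {k : ℕ}
    (hf : FlowVal f r t (k + 1)) {q : List V} (hq : IsRPathTo f r t q) :
    FlowVal (f \ (pathEdges q).toFinset) r t k := by
  obtain ⟨⟨hnd, hch, hhd⟩, hlast⟩ := hq
  have hrt : r ≠ t := hf.ne f (Nat.le_add_left 1 k)
  set S := (pathEdges q).toFinset with hS
  have hSf : S ⊆ f := fun e he => mem_of_chain' hch e (List.mem_toFinset.1 he)
  have hrq : r ∈ q := by
    cases q with
    | nil => simp at hhd
    | cons a l => simp only [List.head?_cons, Option.some_inj] at hhd; simp [hhd]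
  have htq : t ∈ q := List.mem_of_mem_getLast? hlast
  have hoS : ∀ v, outDeg S v = if v ∈ q.dropLast then 1 else 0 :=
    fun v => outDeg_pathEdges (hnd.sublist q.dropLast_sublist) v
  have hiS : ∀ v, inDeg S v = if v ∈ q.tail then 1 else 0 :=
    fun v => inDeg_pathEdges hnd.tail v
  refine ⟨?_, ?_, ?_⟩
  · intro v hvr hvt
    have ho := outDeg_le hSf v
    have hi := inDeg_le hSf v
    have hc := hf.1 v hvr hvt
    rw [outDeg_sdiff hSf, inDeg_sdiff hSf]
    by_cases hv : v ∈ q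
    · have h1 : v ∈ q.dropLast := mem_dropLast_of_mem hv
        (by rw [hlast]; intro h; exact hvt (Option.some_inj.1 h).symm)
      have h2 : v ∈ q.tail := mem_tail_of_mem hv
        (by rw [hhd]; intro h; exact hvr (Option.some_inj.1 h).symm)
      rw [hoS v, if_pos h1] at ho ⊢
      rw [hiS v, if_pos h2] at hi ⊢
      omega
    · have h1 : v ∉ q.dropLast := fun h => hv (q.dropLast_sublist.subset h)
      have h2 : v ∉ q.tail := fun h => hv (q.tail_sublist.subset h)
      rw [hoS v, if_neg h1, hiS v, if_neg h2]
      omega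
  · have ho := outDeg_le hSf r
    have hi := inDeg_le hSf r
    have hc := hf.2.1
    have h1 : r ∈ q.dropLast := mem_dropLast_of_mem hrq
      (by rw [hlast]; intro h; exact hrt (Option.some_inj.1 h).symm)
    have h2 : r ∉ q.tail := not_mem_tail hnd hhd
    rw [outDeg_sdiff hSf, inDeg_sdiff hSf]
    rw [hoS r, if_pos h1] at ho ⊢
    rw [hiS r, if_neg h2] at hi ⊢
    omega
  · have ho := outDeg_le hSf t
    have hi := inDeg_le hSf t
    have hc := hf.2.2
    have h1 : t ∉ q.dropLast := not_mem_dropLast hnd hlast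
    have h2 : t ∈ q.tail := mem_tail_of_mem htq
      (by rw [hhd]; intro h; exact hrt (Option.some_inj.1 h))
    rw [outDeg_sdiff hSf, inDeg_sdiff hSf]
    rw [hoS t, if_neg h1] at ho ⊢
    rw [hiS t, if_pos h2] at hi ⊢
    omega

lemma remove_cycle {f : Finset (V × V)} {r t : V} {k : ℕ}
    (hf : FlowVal f r t k) {w : V} {c : List V} (hnd : (w :: c).Nodup)
    (hch : (w :: (c ++ [w])).Chain' (fun u v => (u, v) ∈ f)) :
    FlowVal (f \ (pathEdges (w :: (c ++ [w]))).toFinset) r t k := by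
  set cl : List V := w :: (c ++ [w]) with hcl
  have hdrop : cl.dropLast = w :: c := by
    rw [hcl, show w :: (c ++ [w]) = (w :: c) ++ [w] by simp, List.dropLast_concat]
  have htail : cl.tail = c ++ [w] := rfl
  set C := (pathEdges cl).toFinset with hC
  have hCf : C ⊆ f := fun e he => mem_of_chain' hch e (List.mem_toFinset.1 he)
  have hoC : ∀ v, outDeg C v = if v ∈ w :: c then 1 else 0 := by
    intro v
    rw [outDeg_pathEdges (by rw [hdrop]; exact hnd) v, hdrop]
  have hiC : ∀ v, inDeg C v = if v ∈ w :: c then 1 else 0 := by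
    intro v
    have hperm : (w :: c).Perm (c ++ [w]) := (List.perm_append_singleton w c).symm
    rw [inDeg_pathEdges (by rw [htail]; exact hperm.nodup_iff.1 hnd) v, htail]
    by_cases h : v ∈ w :: c
    · rw [if_pos (hperm.subset h), if_pos h]
    · rw [if_neg (fun hx => h (hperm.symm.subset hx)), if_neg h]
  refine ⟨?_, ?_, ?_⟩
  · intro v hvr hvt
    have ho := outDeg_le hCf v
    have hi := inDeg_le hCf v
    have hc := hf.1 v hvr hvt
    rw [outDeg_sdiff hCf, inDeg_sdiff hCf, hoC v, hiC v]
    rw [hoC v] at ho; rw [hiC v] at hi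
    by_cases h : v ∈ w :: c <;> simp only [h, if_true, if_false] at ho hi ⊢ <;> omega
  · have ho := outDeg_le hCf r
    have hi := inDeg_le hCf r
    have hc := hf.2.1
    rw [outDeg_sdiff hCf, inDeg_sdiff hCf, hoC r, hiC r]
    rw [hoC r] at ho; rw [hiC r] at hi
    by_cases h : r ∈ w :: c <;> simp only [h, if_true, if_false] at ho hi ⊢ <;> omega
  · have ho := outDeg_le hCf t
    have hi := inDeg_le hCf t
    have hc := hf.2.2
    rw [outDeg_sdiff hCf, inDeg_sdiff hCf, hoC t, hiC t]
    rw [hoC t] at ho; rw [hiC t] at hi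
    by_cases h : t ∈ w :: c <;> simp only [h, if_true, if_false] at ho hi ⊢ <;> omega

lemma pathEdges_ne_nil_of_path {f : Finset (V × V)} {r t : V} {q : List V}
    (hq : IsRPathTo f r t q) (hrt : r ≠ t) : pathEdges q ≠ [] := by
  obtain ⟨⟨hnd, hch, hhd⟩, hlast⟩ := hq
  cases q with
  | nil => simp at hhd
  | cons a l =>
    cases l with
    | nil =>
      simp only [List.head?_cons, Option.some_inj] at hhd
      simp only [List.getLast?_singleton, Option.some_inj] at hlast
      exact absurd (hhd ▸ hlast ▸ rfl) hrt
    | cons b l' => simp [pathEdges_cons2]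

/-- Flow decomposition: a flow of value `k` contains `k` edge-disjoint paths. -/
theorem flow_decomp [Fintype V] :
    ∀ (m : ℕ) (f : Finset (V × V)) (r t : V) (k : ℕ), f.card ≤ m →
      FlowVal f r t k →
      ∃ P : Fin k → List V, (∀ i, IsRPathTo f r t (P i)) ∧
        ∀ i j, i ≠ j → ∀ e, e ∈ pathEdges (P i) → e ∉ pathEdges (P j) := by
  intro m
  induction m with
  | zero =>
    intro f r t k hcard hf
    have hfe : f = ∅ := Finset.card_eq_zero.1 (Nat.le_zero.1 hcard)
    subst hfe
    have h0 : outDeg (∅ : Finset (V × V)) r = 0 := by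
      unfold outDeg; simp
    have h0' : inDeg (∅ : Finset (V × V)) r = 0 := by
      unfold inDeg; simp
    have hk : k = 0 := by have := hf.2.1; omega
    subst hk
    exact ⟨fun i => i.elim0, fun i => i.elim0, fun i => i.elim0⟩
  | succ m ih =>
    intro f r t k hcard hf
    cases k with
    | zero => exact ⟨fun i => i.elim0, fun i => i.elim0, fun i => i.elim0⟩
    | succ k =>
      have hrt : r ≠ t := hf.ne f (Nat.le_add_left 1 k)
      have hr : 1 ≤ outDeg f r := by have := hf.2.1; omega
      rcases exists_path_or_cycle f r t hf.1 hr hrt with ⟨q, hq⟩ | ⟨w, c, hnd, hch⟩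
      · -- extract the path q, recurse on f minus its edges
        set S := (pathEdges q).toFinset with hS
        have hSf : S ⊆ f := fun e he =>
          mem_of_chain' hq.1.2.1 e (List.mem_toFinset.1 he)
        have hSne : S.Nonempty := by
          obtain ⟨e, he⟩ := List.exists_mem_of_ne_nil _ (pathEdges_ne_nil_of_path hq hrt)
          exact ⟨e, List.mem_toFinset.2 he⟩
        have hcard' : (f \ S).card ≤ m := by
          rw [Finset.card_sdiff_of_subset hSf]
          have := Finset.card_pos.2 hSne
          omega
        obtain ⟨P', hP'1, hP'2⟩ := ih (f \ S) r t k hcard' (remove_path hf hq)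
        refine ⟨Fin.cons q P', ?_, ?_⟩
        · intro i
          rcases Fin.eq_zero_or_eq_succ i with rfl | ⟨i', rfl⟩
          · simpa using hq
          · simpa using (hP'1 i').mono Finset.sdiff_subset
        · intro i j hij e hei hej
          rcases Fin.eq_zero_or_eq_succ i with rfl | ⟨i', rfl⟩ <;>
            rcases Fin.eq_zero_or_eq_succ j with rfl | ⟨j', rfl⟩
          · exact hij rfl
          · simp only [Fin.cons_zero] at hei
            simp only [Fin.cons_succ] at hej
            have he : e ∈ f \ S := mem_of_chain' (hP'1 j').1.2.1 e hej
            exact (Finset.mem_sdiff.1 he).2 (List.mem_toFinset.2 hei)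
          · simp only [Fin.cons_succ] at hei
            simp only [Fin.cons_zero] at hej
            have he : e ∈ f \ S := mem_of_chain' (hP'1 i').1.2.1 e hei
            exact (Finset.mem_sdiff.1 he).2 (List.mem_toFinset.2 hej)
          · simp only [Fin.cons_succ] at hei hej
            exact hP'2 i' j' (by simpa using hij) e hei hej
      · -- remove the cycle and recurse
        set C := (pathEdges (w :: (c ++ [w]))).toFinset with hC
        have hCf : C ⊆ f := fun e he =>
          mem_of_chain' hch e (List.mem_toFinset.1 he)
        have hCne : C.Nonempty := by
          have : pathEdges (w :: (c ++ [w])) ≠ [] := by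
            cases c <;> simp [pathEdges_cons2]
          obtain ⟨e, he⟩ := List.exists_mem_of_ne_nil _ this
          exact ⟨e, List.mem_toFinset.2 he⟩
        have hcard' : (f \ C).card ≤ m := by
          rw [Finset.card_sdiff_of_subset hCf]
          have := Finset.card_pos.2 hCne
          omega
        obtain ⟨P, hP1, hP2⟩ := ih (f \ C) r t (k + 1) hcard' (remove_cycle hf hnd hch)
        exact ⟨P, fun i => (hP1 i).mono Finset.sdiff_subset, hP2⟩

end KConn

-- augmentation, cut, Menger
namespace KConn
variable {V : Type*} [DecidableEq V]

lemma rel_of_chain' {R : V → V → Prop} :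
    ∀ {l : List V}, l.Chain' R → ∀ e ∈ pathEdges l, R e.1 e.2
  | [], _, e, he => by simp at he
  | [_], _, e, he => by simp at he
  | a :: b :: l, h, e, he => by
    simp only [List.Chain'] at h
    rw [List.isChain_cons_cons] at h
    rcases List.mem_cons.1 he with he | he
    · exact he ▸ h.1
    · exact rel_of_chain' h.2 e he

lemma one_le_outDeg_of_mem {f : Finset (V × V)} {v x : V} (h : (v, x) ∈ f) :
    1 ≤ outDeg f v :=
  Finset.card_pos.2 ⟨(v, x), Finset.mem_filter.2 ⟨h, rfl⟩⟩

lemma one_le_inDeg_of_mem {f : Finset (V × V)} {v x : V} (h : (x, v) ∈ f) :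
    1 ≤ inDeg f v :=
  Finset.card_pos.2 ⟨(x, v), Finset.mem_filter.2 ⟨h, rfl⟩⟩

lemma card_filter_singleton (P : V × V → Prop) [DecidablePred P] (e : V × V) :
    (({e} : Finset (V × V)).filter P).card = if P e then 1 else 0 := by
  rw [Finset.filter_singleton]; split <;> simp

lemma exists_nodup_chain {R : V → V → Prop} {a b : V}
    (h : Relation.ReflTransGen R a b) :
    ∃ p : List V, p ≠ [] ∧ p.Nodup ∧ p.Chain' R ∧ p.head? = some a ∧
      p.getLast? = some b := by
  induction h with
  | refl => exact ⟨[a], by simp, List.nodup_singleton a, List.isChain_singleton a, rfl, rfl⟩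
  | @tail b c hab hbc ih =>
    obtain ⟨p, hne, hnd, hch, hhd, hlast⟩ := ih
    by_cases hc : c ∈ p
    · obtain ⟨p1, p2, rfl⟩ := List.append_of_mem hc
      refine ⟨p1 ++ [c], by simp, ?_, ?_, ?_, List.getLast?_concat⟩
      · exact hnd.sublist ((List.cons_sublist_cons.2 (List.nil_sublist p2)).append_left p1)
      · exact hch.prefix ⟨p2, by simp⟩
      · cases p1 with
        | nil => simpa using hhd
        | cons x l => simpa using (by simpa using hhd : x = a)
    · refine ⟨p ++ [c], by simp, ?_, ?_, ?_, List.getLast?_concat⟩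
      · exact List.Nodup.append hnd (List.nodup_singleton c)
          (by simp [List.disjoint_singleton]; exact hc)
      · simp only [List.Chain']
        rw [List.isChain_append]
        refine ⟨hch, List.isChain_singleton c, ?_⟩
        intro x hx y hy
        simp only [List.head?_cons, Option.mem_def, Option.some_inj] at hy
        rw [Option.mem_def, hlast, Option.some_inj] at hx
        subst hx; subst hy; exact hbc
      · rw [List.head?_append_of_ne_nil _ hne]; exact hhd

lemma exists_crossing_edge {A : Finset (V × V)} {S : Set V} :
    ∀ {p : List V} {x y : V}, p.Chain' (fun u v => (u, v) ∈ A) →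
      p.head? = some x → p.getLast? = some y → x ∈ S → y ∉ S →
      ∃ u w, u ∈ S ∧ w ∉ S ∧ (u, w) ∈ A
  | [], x, y, _, hhd, _, _, _ => by simp at hhd
  | [a], x, y, _, hhd, hlast, hx, hy => by
    simp only [List.head?_cons, Option.some_inj] at hhd
    simp only [List.getLast?_singleton, Option.some_inj] at hlast
    exact absurd (hhd ▸ hx) (hlast ▸ hy)
  | a :: b :: l, x, y, hch, hhd, hlast, hx, hy => by
    simp only [List.head?_cons, Option.some_inj] at hhd
    subst hhd
    simp only [List.Chain'] at hch
    rw [List.isChain_cons_cons] at hch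
    by_cases hb : b ∈ S
    · exact exists_crossing_edge hch.2 rfl
        (by rw [← hlast, List.getLast?_cons_cons]) hb hy
    · exact ⟨a, b, hx, hb, hch.1⟩

/-- Augmenting along a residual path increases the flow value. -/
lemma augment {H f : Finset (V × V)} {r t : V} {k : ℕ}
    (hfH : f ⊆ H) (hf : FlowVal f r t k) (hrt : r ≠ t)
    (hreach : Relation.ReflTransGen
      (fun u v => (u, v) ∈ H \ f ∨ (v, u) ∈ f) r t) :
    ∃ f', f' ⊆ H ∧ FlowVal f' r t (k + 1) := by
  obtain ⟨l, hne, hnd, hch, hhd, hlast⟩ := exists_nodup_chain hreach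
  set L := pathEdges l with hL
  set A := L.toFinset with hA
  have hResL : ∀ e ∈ L, (e ∈ H \ f) ∨ ((e.2, e.1) ∈ f) :=
    fun e he => rel_of_chain' hch e he
  set Fwd := A.filter (fun e => e ∈ H \ f) with hFwd
  set Bwd := (A.filter (fun e => e ∉ H \ f)).image Prod.swap with hBwd
  have hBwdf : Bwd ⊆ f := by
    intro e he
    rw [hBwd, Finset.mem_image] at he
    obtain ⟨e', he', rfl⟩ := he
    rw [Finset.mem_filter] at he'
    exact (hResL e' (List.mem_toFinset.1 he'.1)).resolve_left he'.2
  have hFwdHf : Fwd ⊆ H \ f := fun e he => (Finset.mem_filter.1 he).2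
  have hdisj : Disjoint f Fwd := by
    rw [Finset.disjoint_right]
    intro e he hef
    exact (Finset.mem_sdiff.1 (hFwdHf he)).2 hef
  have hBwdsub : Bwd ⊆ f ∪ Fwd := hBwdf.trans Finset.subset_union_left
  have hout : ∀ v, outDeg ((f ∪ Fwd) \ Bwd) v
      = outDeg f v + outDeg Fwd v - outDeg Bwd v := fun v => by
    rw [outDeg_sdiff hBwdsub, outDeg_union hdisj]
  have hin : ∀ v, inDeg ((f ∪ Fwd) \ Bwd) v
      = inDeg f v + inDeg Fwd v - inDeg Bwd v := fun v => by
    rw [inDeg_sdiff hBwdsub, inDeg_union hdisj]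
  have hndDrop : l.dropLast.Nodup := hnd.sublist l.dropLast_sublist
  have hndTail : l.tail.Nodup := hnd.tail
  have hmapfst : L.map Prod.fst = l.dropLast := map_fst_pathEdges l
  have hmapsnd : L.map Prod.snd = l.tail := map_snd_pathEdges l
  have hAout : ∀ v ∈ l.dropLast, ∃ y, (v, y) ∈ L ∧
      A.filter (fun x => x.1 = v) = {(v, y)} := by
    intro v hv
    rw [← hmapfst] at hv
    obtain ⟨e, heL, rfl⟩ := List.mem_map.1 hv
    refine ⟨e.2, by simpa using heL, ?_⟩
    rw [show (e.1, e.2) = e from rfl]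
    exact filter_fst_singleton (hmapfst ▸ hndDrop) heL
  have hAin : ∀ v ∈ l.tail, ∃ x, (x, v) ∈ L ∧
      A.filter (fun e => e.2 = v) = {(x, v)} := by
    intro v hv
    rw [← hmapsnd] at hv
    obtain ⟨e, heL, rfl⟩ := List.mem_map.1 hv
    refine ⟨e.1, by simpa using heL, ?_⟩
    rw [show (e.1, e.2) = e from rfl]
    exact filter_snd_singleton (hmapsnd ▸ hndTail) heL
  have hAout0 : ∀ v, v ∉ l.dropLast → A.filter (fun x => x.1 = v) = ∅ := by
    intro v hv
    rw [← hmapfst] at hv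
    exact filter_fst_empty hv
  have hAin0 : ∀ v, v ∉ l.tail → A.filter (fun e => e.2 = v) = ∅ := by
    intro v hv
    rw [← hmapsnd] at hv
    exact filter_snd_empty hv
  have hFo : ∀ v, Fwd.filter (fun x => x.1 = v)
      = (A.filter (fun x => x.1 = v)).filter (fun e => e ∈ H \ f) := fun v => by
    rw [hFwd, Finset.filter_comm]
  have hFi : ∀ v, Fwd.filter (fun x => x.2 = v)
      = (A.filter (fun x => x.2 = v)).filter (fun e => e ∈ H \ f) := fun v => by
    rw [hFwd, Finset.filter_comm]
  have hBo : ∀ v, Bwd.filter (fun x => x.1 = v)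
      = ((A.filter (fun x => x.2 = v)).filter (fun e => e ∉ H \ f)).image
          Prod.swap := by
    intro v
    ext e
    simp only [hBwd, Finset.mem_filter, Finset.mem_image]
    constructor
    · rintro ⟨⟨b, ⟨hbA, hbq⟩, rfl⟩, h1⟩
      exact ⟨b, ⟨⟨hbA, h1⟩, hbq⟩, rfl⟩
    · rintro ⟨b, ⟨⟨hbA, hb2⟩, hbq⟩, rfl⟩
      exact ⟨⟨b, ⟨hbA, hbq⟩, rfl⟩, hb2⟩
  have hBi : ∀ v, Bwd.filter (fun x => x.2 = v)
      = ((A.filter (fun x => x.1 = v)).filter (fun e => e ∉ H \ f)).image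
          Prod.swap := by
    intro v
    ext e
    simp only [hBwd, Finset.mem_filter, Finset.mem_image]
    constructor
    · rintro ⟨⟨b, ⟨hbA, hbq⟩, rfl⟩, h1⟩
      exact ⟨b, ⟨⟨hbA, h1⟩, hbq⟩, rfl⟩
    · rintro ⟨b, ⟨⟨hbA, hb1⟩, hbq⟩, rfl⟩
      exact ⟨⟨b, ⟨hbA, hbq⟩, rfl⟩, hb1⟩
  refine ⟨(f ∪ Fwd) \ Bwd, ?_, ?_, ?_, ?_⟩
  · intro e he
    rcases Finset.mem_union.1 (Finset.mem_sdiff.1 he).1 with h | h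
    · exact hfH h
    · exact (Finset.mem_sdiff.1 (hFwdHf h)).1
  · -- conservation
    intro v hvr hvt
    rw [hout v, hin v]
    by_cases hvl : v ∈ l
    · have h1 : v ∈ l.dropLast := mem_dropLast_of_mem hvl
        (by rw [hlast]; intro hh; exact hvt (Option.some_inj.1 hh).symm)
      have h2 : v ∈ l.tail := mem_tail_of_mem hvl
        (by rw [hhd]; intro hh; exact hvr (Option.some_inj.1 hh).symm)
      obtain ⟨y, hyL, hOutA⟩ := hAout v h1
      obtain ⟨x, hxL, hInA⟩ := hAin v h2
      have c1 : outDeg Fwd v = if (v, y) ∈ H \ f then 1 else 0 := by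
        unfold outDeg; rw [hFo v, hOutA, card_filter_singleton]
      have c2 : inDeg Fwd v = if (x, v) ∈ H \ f then 1 else 0 := by
        unfold inDeg; rw [hFi v, hInA, card_filter_singleton]
      have c3 : outDeg Bwd v = if (x, v) ∉ H \ f then 1 else 0 := by
        unfold outDeg
        rw [hBo v, Finset.card_image_of_injective _ Prod.swap_injective,
          hInA, card_filter_singleton]
      have c4 : inDeg Bwd v = if (v, y) ∉ H \ f then 1 else 0 := by
        unfold inDeg
        rw [hBi v, Finset.card_image_of_injective _ Prod.swap_injective,
          hOutA, card_filter_singleton]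
      have e1 : (if (x, v) ∉ H \ f then 1 else 0) ≤ outDeg f v := by
        split
        · exact one_le_outDeg_of_mem ((hResL _ hxL).resolve_left ‹_›)
        · exact Nat.zero_le _
      have e2 : (if (v, y) ∉ H \ f then 1 else 0) ≤ inDeg f v := by
        split
        · exact one_le_inDeg_of_mem ((hResL _ hyL).resolve_left ‹_›)
        · exact Nat.zero_le _
      have e3 : (if (x, v) ∈ H \ f then 1 else 0)
          + (if (x, v) ∉ H \ f then 1 else 0) = 1 := by
        by_cases q : (x, v) ∈ H \ f <;> simp [q]
      have e4 : (if (v, y) ∈ H \ f then 1 else 0)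
          + (if (v, y) ∉ H \ f then 1 else 0) = 1 := by
        by_cases q : (v, y) ∈ H \ f <;> simp [q]
      have hcons := hf.1 v hvr hvt
      omega
    · have h1 : v ∉ l.dropLast := fun h => hvl (l.dropLast_sublist.subset h)
      have h2 : v ∉ l.tail := fun h => hvl (l.tail_sublist.subset h)
      have c1 : outDeg Fwd v = 0 := by
        unfold outDeg; rw [hFo v, hAout0 v h1, Finset.filter_empty, Finset.card_empty]
      have c2 : inDeg Fwd v = 0 := by
        unfold inDeg; rw [hFi v, hAin0 v h2, Finset.filter_empty, Finset.card_empty]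
      have c3 : outDeg Bwd v = 0 := by
        unfold outDeg
        rw [hBo v, hAin0 v h2, Finset.filter_empty, Finset.image_empty, Finset.card_empty]
      have c4 : inDeg Bwd v = 0 := by
        unfold inDeg
        rw [hBi v, hAout0 v h1, Finset.filter_empty, Finset.image_empty, Finset.card_empty]
      have hcons := hf.1 v hvr hvt
      omega
  · -- value at r
    rw [hout r, hin r]
    have hrl : r ∈ l := by
      cases l with
      | nil => simp at hhd
      | cons a l' =>
        simp only [List.head?_cons, Option.some_inj] at hhd; simp [hhd]
    have h1 : r ∈ l.dropLast := mem_dropLast_of_mem hrl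
      (by rw [hlast]; intro hh; exact hrt (Option.some_inj.1 hh).symm)
    have h2 : r ∉ l.tail := not_mem_tail hnd hhd
    obtain ⟨y, hyL, hOutA⟩ := hAout r h1
    have c1 : outDeg Fwd r = if (r, y) ∈ H \ f then 1 else 0 := by
      unfold outDeg; rw [hFo r, hOutA, card_filter_singleton]
    have c2 : inDeg Fwd r = 0 := by
      unfold inDeg; rw [hFi r, hAin0 r h2, Finset.filter_empty, Finset.card_empty]
    have c3 : outDeg Bwd r = 0 := by
      unfold outDeg
      rw [hBo r, hAin0 r h2, Finset.filter_empty, Finset.image_empty, Finset.card_empty]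
    have c4 : inDeg Bwd r = if (r, y) ∉ H \ f then 1 else 0 := by
      unfold inDeg
      rw [hBi r, Finset.card_image_of_injective _ Prod.swap_injective,
        hOutA, card_filter_singleton]
    have e2 : (if (r, y) ∉ H \ f then 1 else 0) ≤ inDeg f r := by
      split
      · exact one_le_inDeg_of_mem ((hResL _ hyL).resolve_left ‹_›)
      · exact Nat.zero_le _
    have e4 : (if (r, y) ∈ H \ f then 1 else 0)
        + (if (r, y) ∉ H \ f then 1 else 0) = 1 := by
      by_cases q : (r, y) ∈ H \ f <;> simp [q]
    have hval := hf.2.1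
    omega
  · -- value at t
    rw [hout t, hin t]
    have htl : t ∈ l := List.mem_of_mem_getLast? hlast
    have h1 : t ∉ l.dropLast := not_mem_dropLast hnd hlast
    have h2 : t ∈ l.tail := mem_tail_of_mem htl
      (by rw [hhd]; intro hh; exact hrt (Option.some_inj.1 hh))
    obtain ⟨x, hxL, hInA⟩ := hAin t h2
    have c1 : outDeg Fwd t = 0 := by
      unfold outDeg; rw [hFo t, hAout0 t h1, Finset.filter_empty, Finset.card_empty]
    have c2 : inDeg Fwd t = if (x, t) ∈ H \ f then 1 else 0 := by
      unfold inDeg; rw [hFi t, hInA, card_filter_singleton]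
    have c3 : outDeg Bwd t = if (x, t) ∉ H \ f then 1 else 0 := by
      unfold outDeg
      rw [hBo t, Finset.card_image_of_injective _ Prod.swap_injective,
        hInA, card_filter_singleton]
    have c4 : inDeg Bwd t = 0 := by
      unfold inDeg
      rw [hBi t, hAout0 t h1, Finset.filter_empty, Finset.image_empty, Finset.card_empty]
    have e1 : (if (x, t) ∉ H \ f then 1 else 0) ≤ outDeg f t := by
      split
      · exact one_le_outDeg_of_mem ((hResL _ hxL).resolve_left ‹_›)
      · exact Nat.zero_le _
    have e3 : (if (x, t) ∈ H \ f then 1 else 0)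
        + (if (x, t) ∉ H \ f then 1 else 0) = 1 := by
      by_cases q : (x, t) ∈ H \ f <;> simp [q]
    have hval := hf.2.2
    omega

end KConn

-- min cut and Menger
namespace KConn
variable {V : Type*} [DecidableEq V] [Fintype V]

lemma sum_outDeg (f : Finset (V × V)) (S' : Finset V) :
    ∑ v ∈ S', outDeg f v = (f.filter (fun e => e.1 ∈ S')).card := by
  have : f.filter (fun e => e.1 ∈ S')
      = S'.biUnion (fun v => f.filter (fun e => e.1 = v)) := by
    ext e
    simp only [Finset.mem_filter, Finset.mem_biUnion]
    constructor
    · rintro ⟨hef, h1⟩; exact ⟨e.1, h1, hef, rfl⟩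
    · rintro ⟨v, hv, hef, rfl⟩; exact ⟨hef, hv⟩
  rw [this, Finset.card_biUnion]
  · rfl
  · intro u hu v hv huv
    simp only [Finset.disjoint_left, Finset.mem_filter]
    rintro e ⟨_, rfl⟩ ⟨_, h⟩
    exact huv h

lemma sum_inDeg (f : Finset (V × V)) (S' : Finset V) :
    ∑ v ∈ S', inDeg f v = (f.filter (fun e => e.2 ∈ S')).card := by
  have : f.filter (fun e => e.2 ∈ S')
      = S'.biUnion (fun v => f.filter (fun e => e.2 = v)) := by
    ext e
    simp only [Finset.mem_filter, Finset.mem_biUnion]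
    constructor
    · rintro ⟨hef, h1⟩; exact ⟨e.2, h1, hef, rfl⟩
    · rintro ⟨v, hv, hef, rfl⟩; exact ⟨hef, hv⟩
  rw [this, Finset.card_biUnion]
  · rfl
  · intro u hu v hv huv
    simp only [Finset.disjoint_left, Finset.mem_filter]
    rintro e ⟨_, rfl⟩ ⟨_, h⟩
    exact huv h

/-- If `t` is not residually reachable from `r`, the crossing edges form a cut
of size exactly `k`. -/
lemma cut_of_not_reach {H f : Finset (V × V)} {r t : V} {k : ℕ}
    (hfH : f ⊆ H) (hf : FlowVal f r t k)
    (hnr : ¬ Relation.ReflTransGen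
      (fun u v => (u, v) ∈ H \ f ∨ (v, u) ∈ f) r t) :
    ∃ C ⊆ H, C.card = k ∧ ∀ p, ¬ IsRPathTo (H \ C) r t p := by
  set Res : V → V → Prop := fun u v => (u, v) ∈ H \ f ∨ (v, u) ∈ f with hRes
  set S : Set V := {v | Relation.ReflTransGen Res r v} with hS
  set S' : Finset V := Finset.univ.filter (fun v => v ∈ S) with hS'
  have hmemS' : ∀ v, v ∈ S' ↔ v ∈ S := by
    intro v; simp [hS']
  have hrS : r ∈ S' := (hmemS' r).2 Relation.ReflTransGen.refl
  have htS : t ∉ S' := fun h => hnr ((hmemS' t).1 h)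
  -- forward residual closure
  have hclosed : ∀ u v, u ∈ S' → Res u v → v ∈ S' := by
    intro u v hu huv
    exact (hmemS' v).2 (Relation.ReflTransGen.tail ((hmemS' u).1 hu) huv)
  set C := H.filter (fun e => e.1 ∈ S' ∧ e.2 ∉ S') with hC
  have hCf : C ⊆ f := by
    intro e he
    rw [hC, Finset.mem_filter] at he
    by_contra hef
    exact he.2.2 (hclosed e.1 e.2 he.2.1 (Or.inl (Finset.mem_sdiff.2 ⟨he.1, hef⟩)))
  -- flow conservation sum over S'
  have hsum : ∑ v ∈ S', outDeg f v = (∑ v ∈ S', inDeg f v) + k := by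
    have : ∀ v ∈ S', outDeg f v = inDeg f v + (if v = r then k else 0) := by
      intro v hv
      by_cases hvr : v = r
      · subst hvr; rw [if_pos rfl]; exact hf.2.1
      · rw [if_neg hvr, Nat.add_zero]
        exact hf.1 v hvr (fun h => htS (h ▸ hv))
    rw [Finset.sum_congr rfl this, Finset.sum_add_distrib,
      Finset.sum_ite_eq' S' r (fun _ => k), if_pos hrS]
  -- decompose the two sums
  have hP1 : (f.filter (fun e => e.1 ∈ S')).card
      = (f.filter (fun e => e.1 ∈ S' ∧ e.2 ∈ S')).card
        + (f.filter (fun e => e.1 ∈ S' ∧ e.2 ∉ S')).card := by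
    rw [← Finset.filter_filter, ← Finset.filter_filter,
      Finset.card_filter_add_card_filter_not]
  have hP2 : (f.filter (fun e => e.2 ∈ S')).card
      = (f.filter (fun e => e.1 ∈ S' ∧ e.2 ∈ S')).card
        + (f.filter (fun e => e.1 ∉ S' ∧ e.2 ∈ S')).card := by
    have h1 : f.filter (fun e => e.1 ∈ S' ∧ e.2 ∈ S')
        = (f.filter (fun e => e.2 ∈ S')).filter (fun e => e.1 ∈ S') := by
      rw [Finset.filter_filter]
      exact Finset.filter_congr (fun e _ => by tauto)
    have h2 : f.filter (fun e => e.1 ∉ S' ∧ e.2 ∈ S')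
        = (f.filter (fun e => e.2 ∈ S')).filter (fun e => ¬ e.1 ∈ S') := by
      rw [Finset.filter_filter]
      exact Finset.filter_congr (fun e _ => by tauto)
    rw [h1, h2, Finset.card_filter_add_card_filter_not]
  have hY : f.filter (fun e => e.1 ∉ S' ∧ e.2 ∈ S') = ∅ := by
    apply Finset.filter_eq_empty_iff.2
    rintro e hef ⟨h1, h2⟩
    exact h1 (hclosed e.2 e.1 h2 (Or.inr hef))
  have hX : (f.filter (fun e => e.1 ∈ S' ∧ e.2 ∉ S')).card = k := by
    have := hsum
    rw [sum_outDeg, sum_inDeg, hP1, hP2, hY] at this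
    simpa using this
  have hCX : C = f.filter (fun e => e.1 ∈ S' ∧ e.2 ∉ S') := by
    ext e
    simp only [hC, Finset.mem_filter]
    constructor
    · rintro ⟨heH, hcross⟩
      exact ⟨hCf (Finset.mem_filter.2 ⟨heH, hcross⟩), hcross⟩
    · rintro ⟨hef, hcross⟩
      exact ⟨hfH hef, hcross⟩
  refine ⟨C, Finset.filter_subset _ _, by rw [hCX]; exact hX, ?_⟩
  rintro p ⟨⟨hnd, hch, hhd⟩, hlast⟩
  obtain ⟨u, w, huS, hwS, huw⟩ := exists_crossing_edge (A := H \ C) (S := S)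
    hch hhd hlast ((hmemS' r).1 hrS) (fun h => htS ((hmemS' t).2 h))
  rw [Finset.mem_sdiff] at huw
  exact huw.2 (Finset.mem_filter.2 ⟨huw.1, (hmemS' u).2 huS,
    fun h => hwS ((hmemS' w).1 h)⟩)

/-- Existence of a flow of value `k` from the cut condition. -/
lemma exists_flow {H : Finset (V × V)} {r t : V} (hrt : r ≠ t) :
    ∀ k, (∀ F ⊆ H, F.card + 1 ≤ k → ∃ p, IsRPathTo (H \ F) r t p) →
      ∃ f, f ⊆ H ∧ FlowVal f r t k := by
  intro k
  induction k with
  | zero =>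
    intro _
    refine ⟨∅, Finset.empty_subset H, ?_, ?_, ?_⟩ <;>
      simp [outDeg, inDeg]
  | succ k ih =>
    intro hcut
    obtain ⟨f, hfH, hf⟩ := ih (fun F hF hcard => hcut F hF (by omega))
    by_cases hreach : Relation.ReflTransGen
        (fun u v => (u, v) ∈ H \ f ∨ (v, u) ∈ f) r t
    · exact augment hfH hf hrt hreach
    · obtain ⟨C, hCH, hCcard, hnopath⟩ := cut_of_not_reach hfH hf hreach
      obtain ⟨p, hp⟩ := hcut C hCH (by omega)
      exact absurd hp (hnopath p)

/-- Edge version of Menger's theorem. -/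
theorem menger (H : Finset (V × V)) (r t : V) (k : ℕ)
    (hcut : ∀ F ⊆ H, F.card + 1 ≤ k → ∃ p, IsRPathTo (H \ F) r t p) :
    HasKPaths H r t k := by
  by_cases hrt : r = t
  · subst hrt
    refine ⟨fun _ => [r], fun i => ⟨⟨List.nodup_singleton r,
      List.isChain_singleton r, rfl⟩, rfl⟩, ?_⟩
    intro i j _ e he
    simp at he
  · obtain ⟨f, hfH, hf⟩ := exists_flow hrt k hcut
    obtain ⟨P, hP1, hP2⟩ := flow_decomp f.card f r t k le_rfl hf
    exact ⟨P, fun i => (hP1 i).mono hfH, hP2⟩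

end KConn

namespace KConn

lemma path_in_empty {V : Type*} [DecidableEq V] {r t : V} {p : List V}
    (h : IsRPathTo (∅ : Finset (V × V)) r t p) : t = r := by
  obtain ⟨⟨hnd, hch, hhd⟩, hlast⟩ := h
  cases p with
  | nil => simp at hhd
  | cons a l =>
    cases l with
    | nil =>
      simp only [List.head?_cons, Option.some_inj] at hhd
      simp only [List.getLast?_singleton, Option.some_inj] at hlast
      rw [← hhd, ← hlast]
    | cons b l' =>
      simp only [List.Chain'] at hch
      rw [List.isChain_cons_cons] at hch
      exact absurd hch.1 (by simp)

lemma trivial_kpaths {V : Type*} (H : Finset (V × V)) (r : V) (k : ℕ) :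
    HasKPaths H r r k := by
  refine ⟨fun _ => [r], fun i => ⟨⟨List.nodup_singleton r,
    List.isChain_singleton r, rfl⟩, rfl⟩, ?_⟩
  intro i j _ e he
  simp at he

end KConn


/-- Amplification by independent sampling: if each independent random subgraph `Z i`
gives, for every edge set `F` of at most `k−1` edges and every terminal `t`, an `r→t`
path avoiding `F` with probability at least `q`, and `N ≥ 2k ln n / q` with
`n ≥ max(|E|², |T|)` and `|E|^(k−1)·|T| ≤ n^(2k−1)`, then with probability at least
`1 − 1/n` the union of the `Z i` contains, for every terminal `t` and every `F` of
`k−1` edges, an `r→t` path avoiding `F`; hence it has `k` edge-disjoint `r→t` paths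
for every terminal. -/
theorem union_of_samples_is_k_connected
    {V : Type*} [Fintype V] [DecidableEq V]
    {Ω : Type*} [MeasurableSpace Ω] (μ : Measure Ω) [IsProbabilityMeasure μ]
    (E : Finset (V × V)) (r : V) (T : Finset V) (k n N : ℕ) (q : ℝ)
    (hq0 : 0 < q) (hq1 : q ≤ 1)
    (Z : Fin N → Ω → Finset (V × V))
    (hZE : ∀ i ω, Z i ω ⊆ E)
    (hmeas : ∀ i, @Measurable Ω (Finset (V × V)) _ ⊤ (Z i))
    (hindep : ProbabilityTheory.iIndepFun (m := fun _ : Fin N => (⊤ : MeasurableSpace (Finset (V × V)))) Z μ)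
    (hgood : ∀ (i : Fin N), ∀ F ⊆ E, (F.card : ℤ) ≤ (k : ℤ) - 1 → ∀ t ∈ T,
      ENNReal.ofReal q ≤ μ {ω | ∃ p, IsRPathTo (Z i ω \ F) r t p})
    (hN : 2 * k * Real.log n / q ≤ (N : ℝ))
    (hnE : E.card ^ 2 ≤ n) (hnT : T.card ≤ n)
    (hcount : (E.card : ℝ) ^ (k - 1) * T.card ≤ (n : ℝ) ^ (2 * k - 1)) :
    ENNReal.ofReal (1 - 1 / (n : ℝ)) ≤
      μ {ω | ∀ t ∈ T,
        (∀ F ⊆ E, (F.card : ℤ) = (k : ℤ) - 1 →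
          ∃ p, IsRPathTo ((Finset.univ.biUnion fun i => Z i ω) \ F) r t p) ∧
        HasKPaths (Finset.univ.biUnion fun i => Z i ω) r t k} := by
  classical
  -- trivial small-n cases
  rcases Nat.lt_or_ge n 2 with hn2 | hn2
  · interval_cases n
    · -- n = 0 : T is empty
      have hT : T = ∅ := Finset.card_eq_zero.1 (Nat.le_zero.1 hnT)
      have hsub : (Set.univ : Set Ω) ⊆ {ω | ∀ t ∈ T,
          (∀ F ⊆ E, (F.card : ℤ) = (k : ℤ) - 1 →
            ∃ p, IsRPathTo ((Finset.univ.biUnion fun i => Z i ω) \ F) r t p) ∧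
          HasKPaths (Finset.univ.biUnion fun i => Z i ω) r t k} := by
        intro ω _ t ht
        rw [hT] at ht
        simp at ht
      calc ENNReal.ofReal (1 - 1 / ((0 : ℕ) : ℝ)) ≤ 1 := by norm_num
        _ = μ Set.univ := measure_univ.symm
        _ ≤ _ := measure_mono hsub
    · -- n = 1
      norm_num
  have hn0 : (0 : ℝ) < n := by
    have h2 : (2 : ℝ) ≤ n := by exact_mod_cast hn2
    linarith
  have h1n0 : (0 : ℝ) ≤ 1 / n := by positivity
  have h1n1 : (0 : ℝ) ≤ 1 - 1 / n := by
    have : 1 / (n : ℝ) ≤ 1 := by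
      rw [div_le_one hn0]
      have h2 : (2 : ℝ) ≤ n := by exact_mod_cast hn2
      linarith
    linarith
  rcases Nat.eq_zero_or_pos k with rfl | hk
  · -- k = 0 : everything holds
    have hsub : (Set.univ : Set Ω) ⊆ {ω | ∀ t ∈ T,
        (∀ F ⊆ E, (F.card : ℤ) = ((0 : ℕ) : ℤ) - 1 →
          ∃ p, IsRPathTo ((Finset.univ.biUnion fun i => Z i ω) \ F) r t p) ∧
        HasKPaths (Finset.univ.biUnion fun i => Z i ω) r t 0} := by
      intro ω _ t ht
      refine ⟨fun F hF hcard => absurd hcard (by omega), ?_⟩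
      exact ⟨fun i => i.elim0, fun i => i.elim0, fun i => i.elim0⟩
    calc ENNReal.ofReal (1 - 1 / (n : ℝ)) ≤ 1 := ENNReal.ofReal_le_one.2 (by linarith)
      _ = μ Set.univ := measure_univ.symm
      _ ≤ _ := measure_mono hsub
  by_cases hEk : k - 1 ≤ E.card
  case neg =>
    -- degenerate: |E| < k - 1; every terminal must equal r
    have hEk' : E.card + 1 < k := by omega
    rcases Nat.eq_zero_or_pos N with rfl | hN1
    · exfalso
      have hlog : (0 : ℝ) < Real.log n := Real.log_pos (by exact_mod_cast hn2)
      have h2 : (0 : ℝ) < 2 * k * Real.log n / q := by positivity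
      simp only [Nat.cast_zero] at hN
      linarith
    · have hTr : ∀ t ∈ T, t = r := by
        intro t ht
        by_contra htr
        have hq' := hgood ⟨0, hN1⟩ E subset_rfl (by omega) t ht
        have hempty : {ω | ∃ p, IsRPathTo (Z ⟨0, hN1⟩ ω \ E) r t p} = (∅ : Set Ω) := by
          ext ω
          simp only [Set.mem_setOf_eq, Set.mem_empty_iff_false, iff_false, not_exists]
          intro p hp
          have hzE : Z ⟨0, hN1⟩ ω \ E = ∅ :=
            Finset.sdiff_eq_empty_iff_subset.2 (hZE ⟨0, hN1⟩ ω)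
          rw [hzE] at hp
          exact htr (KConn.path_in_empty hp)
        rw [hempty, measure_empty] at hq'
        exact absurd hq' (not_le.2 (ENNReal.ofReal_pos.2 hq0))
      have hsub : (Set.univ : Set Ω) ⊆ {ω | ∀ t ∈ T,
          (∀ F ⊆ E, (F.card : ℤ) = (k : ℤ) - 1 →
            ∃ p, IsRPathTo ((Finset.univ.biUnion fun i => Z i ω) \ F) r t p) ∧
          HasKPaths (Finset.univ.biUnion fun i => Z i ω) r t k} := by
        intro ω _ t ht
        refine ⟨?_, ?_⟩
        · intro F hF hcard
          have := Finset.card_le_card hF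
          omega
        · rw [hTr t ht]
          exact KConn.trivial_kpaths _ r k
      calc ENNReal.ofReal (1 - 1 / (n : ℝ)) ≤ 1 := ENNReal.ofReal_le_one.2 (by linarith)
        _ = μ Set.univ := measure_univ.symm
        _ ≤ _ := measure_mono hsub
  -- main case
  have hq1' : (0 : ℝ) ≤ 1 - q := by linarith
  set Good : Set Ω := {ω | ∀ F ∈ E.powersetCard (k - 1), ∀ t ∈ T,
    ∃ p, IsRPathTo ((Finset.univ.biUnion fun i => Z i ω) \ F) r t p} with hGood
  -- deterministic part : Good is contained in the goal event
  have hGG : Good ⊆ {ω | ∀ t ∈ T,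
      (∀ F ⊆ E, (F.card : ℤ) = (k : ℤ) - 1 →
        ∃ p, IsRPathTo ((Finset.univ.biUnion fun i => Z i ω) \ F) r t p) ∧
      HasKPaths (Finset.univ.biUnion fun i => Z i ω) r t k} := by
    intro ω hω t ht
    have hHE : (Finset.univ.biUnion fun i => Z i ω) ⊆ E :=
      Finset.biUnion_subset.2 (fun i _ => hZE i ω)
    constructor
    · intro F hF hcard
      have hc : F.card = k - 1 := by omega
      exact hω F (Finset.mem_powersetCard.2 ⟨hF, hc⟩) t ht
    · apply KConn.menger
      intro F hFH hFk
      obtain ⟨F', hFF', hF'E, hF'card⟩ :=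
        Finset.exists_subsuperset_card_eq (hFH.trans hHE) (by omega) hEk
      obtain ⟨p, hp⟩ := hω F' (Finset.mem_powersetCard.2 ⟨hF'E, hF'card⟩) t ht
      exact ⟨p, hp.mono (Finset.sdiff_subset_sdiff subset_rfl hFF')⟩
  -- probabilistic part
  have key : ∀ F ⊆ E, F.card + 1 = k → ∀ t ∈ T,
      μ {ω | ¬ ∃ p, IsRPathTo ((Finset.univ.biUnion fun i => Z i ω) \ F) r t p}
        ≤ ENNReal.ofReal ((1 - q) ^ N) := by
    intro F hFE hFc t ht
    have hsub : {ω | ¬ ∃ p, IsRPathTo ((Finset.univ.biUnion fun i => Z i ω) \ F) r t p}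
        ⊆ ⋂ i ∈ (Finset.univ : Finset (Fin N)),
            Z i ⁻¹' {A : Finset (V × V) | ¬ ∃ p, IsRPathTo (A \ F) r t p} := by
      refine Set.subset_iInter₂ (fun i _ => ?_)
      intro ω hω
      simp only [Set.mem_setOf_eq] at hω
      simp only [Set.mem_preimage, Set.mem_setOf_eq]
      rintro ⟨p, hp⟩
      refine hω ⟨p, hp.mono (Finset.sdiff_subset_sdiff ?_ subset_rfl)⟩
      exact fun x hx => Finset.mem_biUnion.2 ⟨i, Finset.mem_univ i, hx⟩
    have hprod := ProbabilityTheory.iIndepFun_iff_measure_inter_preimage_eq_mul.1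
      hindep Finset.univ
      (sets := fun _ => {A : Finset (V × V) | ¬ ∃ p, IsRPathTo (A \ F) r t p})
      (fun i _ => MeasurableSpace.measurableSet_top)
    have hfac : ∀ i : Fin N,
        μ (Z i ⁻¹' {A : Finset (V × V) | ¬ ∃ p, IsRPathTo (A \ F) r t p})
          ≤ ENNReal.ofReal (1 - q) := by
      intro i
      have hc : Z i ⁻¹' {A : Finset (V × V) | ¬ ∃ p, IsRPathTo (A \ F) r t p}
          = {ω | ∃ p, IsRPathTo (Z i ω \ F) r t p}ᶜ := by
        ext ω; simp [Set.mem_preimage]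
      have hmeas' : MeasurableSet {ω | ∃ p, IsRPathTo (Z i ω \ F) r t p} := by
        have heq : {ω | ∃ p, IsRPathTo (Z i ω \ F) r t p}
            = Z i ⁻¹' {A : Finset (V × V) | ∃ p, IsRPathTo (A \ F) r t p} := rfl
        rw [heq]
        exact hmeas i MeasurableSpace.measurableSet_top
      rw [hc, prob_compl_eq_one_sub hmeas']
      have hg := hgood i F hFE (by omega) t ht
      calc 1 - μ {ω | ∃ p, IsRPathTo (Z i ω \ F) r t p}
          ≤ 1 - ENNReal.ofReal q := tsub_le_tsub_left hg 1
        _ = ENNReal.ofReal (1 - q) := by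
            rw [ENNReal.ofReal_sub 1 hq0.le, ENNReal.ofReal_one]
    calc μ {ω | ¬ ∃ p, IsRPathTo ((Finset.univ.biUnion fun i => Z i ω) \ F) r t p}
        ≤ μ (⋂ i ∈ (Finset.univ : Finset (Fin N)),
            Z i ⁻¹' {A : Finset (V × V) | ¬ ∃ p, IsRPathTo (A \ F) r t p}) :=
          measure_mono hsub
      _ = ∏ i : Fin N,
            μ (Z i ⁻¹' {A : Finset (V × V) | ¬ ∃ p, IsRPathTo (A \ F) r t p}) := hprod
      _ ≤ ∏ _i : Fin N, ENNReal.ofReal (1 - q) :=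
          Finset.prod_le_prod' (fun i _ => hfac i)
      _ = ENNReal.ofReal (1 - q) ^ N := by
          rw [Finset.prod_const, Finset.card_univ, Fintype.card_fin]
      _ = ENNReal.ofReal ((1 - q) ^ N) := (ENNReal.ofReal_pow hq1' N).symm
  -- union bound over F and t
  have hcover : Goodᶜ ⊆ ⋃ F ∈ E.powersetCard (k - 1),
      ⋃ t ∈ T, {ω | ¬ ∃ p, IsRPathTo ((Finset.univ.biUnion fun i => Z i ω) \ F) r t p} := by
    intro ω hω
    simp only [hGood, Set.mem_compl_iff, Set.mem_setOf_eq] at hω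
    push_neg at hω
    obtain ⟨F, hF, t, ht, hnp⟩ := hω
    exact Set.mem_biUnion hF (Set.mem_biUnion ht (by simp only [Set.mem_setOf_eq, not_exists]; exact hnp))
  have hUB : μ Goodᶜ ≤
      ((E.powersetCard (k - 1)).card : ENNReal)
        * ((T.card : ENNReal) * ENNReal.ofReal ((1 - q) ^ N)) := by
    calc μ Goodᶜ
        ≤ μ (⋃ F ∈ E.powersetCard (k - 1), ⋃ t ∈ T,
            {ω | ¬ ∃ p, IsRPathTo ((Finset.univ.biUnion fun i => Z i ω) \ F) r t p}) :=
          measure_mono hcover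
      _ ≤ ∑ F ∈ E.powersetCard (k - 1), μ (⋃ t ∈ T,
            {ω | ¬ ∃ p, IsRPathTo ((Finset.univ.biUnion fun i => Z i ω) \ F) r t p}) :=
          measure_biUnion_finset_le _ _
      _ ≤ ∑ F ∈ E.powersetCard (k - 1), ∑ t ∈ T,
            μ {ω | ¬ ∃ p, IsRPathTo ((Finset.univ.biUnion fun i => Z i ω) \ F) r t p} :=
          Finset.sum_le_sum (fun F _ => measure_biUnion_finset_le _ _)
      _ ≤ ∑ _F ∈ E.powersetCard (k - 1), ∑ _t ∈ T, ENNReal.ofReal ((1 - q) ^ N) := by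
          refine Finset.sum_le_sum (fun F hF => Finset.sum_le_sum (fun t ht => ?_))
          have hm := Finset.mem_powersetCard.1 hF
          exact key F hm.1 (by omega) t ht
      _ = ((E.powersetCard (k - 1)).card : ENNReal)
            * ((T.card : ENNReal) * ENNReal.ofReal ((1 - q) ^ N)) := by
          rw [Finset.sum_const, Finset.sum_const, nsmul_eq_mul, nsmul_eq_mul]
  -- the real-number estimate
  have hP0 : (0 : ℝ) ≤ (1 - q) ^ N := pow_nonneg hq1' N
  have hreal : ((E.card.choose (k - 1) : ℝ)) * ((T.card : ℝ) * (1 - q) ^ N)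
      ≤ 1 / n := by
    have hchoose : ((E.card.choose (k - 1) : ℝ)) ≤ (E.card : ℝ) ^ (k - 1) := by
      exact_mod_cast Nat.choose_le_pow E.card (k - 1)
    have hexp : (1 - q) ^ N ≤ 1 / (n : ℝ) ^ (2 * k) := by
      have h1 : (1 : ℝ) - q ≤ Real.exp (-q) := by
        have := Real.add_one_le_exp (-q); linarith
      have h2 : (1 - q) ^ N ≤ Real.exp (-q) ^ N := pow_le_pow_left₀ hq1' h1 N
      rw [← Real.exp_nat_mul] at h2
      have h3 : 2 * (k : ℝ) * Real.log n ≤ q * N := by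
        rw [div_le_iff₀ hq0] at hN
        linarith
      have h4 : Real.exp ((N : ℝ) * -q) ≤ Real.exp (-(2 * (k : ℝ) * Real.log n)) := by
        apply Real.exp_le_exp.2
        linarith
      have h5 : Real.exp (-(2 * (k : ℝ) * Real.log n)) = 1 / (n : ℝ) ^ (2 * k) := by
        rw [Real.exp_neg,
          show (2 * (k : ℝ) * Real.log n) = ((2 * k : ℕ) : ℝ) * Real.log n by
            push_cast; ring,
          Real.exp_nat_mul, Real.exp_log hn0, one_div]
      calc (1 - q) ^ N ≤ Real.exp ((N : ℝ) * -q) := h2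
        _ ≤ Real.exp (-(2 * (k : ℝ) * Real.log n)) := h4
        _ = 1 / (n : ℝ) ^ (2 * k) := h5
    have hT0 : (0 : ℝ) ≤ (T.card : ℝ) := Nat.cast_nonneg _
    have step1 : ((E.card.choose (k - 1) : ℝ)) * ((T.card : ℝ) * (1 - q) ^ N)
        ≤ (E.card : ℝ) ^ (k - 1) * ((T.card : ℝ) * (1 / (n : ℝ) ^ (2 * k))) := by
      apply mul_le_mul hchoose (mul_le_mul_of_nonneg_left hexp hT0)
        (mul_nonneg hT0 hP0) (by positivity)
    have step3 : ((E.card : ℝ) ^ (k - 1) * (T.card : ℝ)) * (1 / (n : ℝ) ^ (2 * k))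
        ≤ (n : ℝ) ^ (2 * k - 1) * (1 / (n : ℝ) ^ (2 * k)) :=
      mul_le_mul_of_nonneg_right hcount (by positivity)
    have step4 : (n : ℝ) ^ (2 * k - 1) * (1 / (n : ℝ) ^ (2 * k)) = 1 / n := by
      have h2k : 2 * k = (2 * k - 1) + 1 := by omega
      rw [h2k, pow_succ]
      have hnne : (n : ℝ) ≠ 0 := ne_of_gt hn0
      have hpne : (n : ℝ) ^ (2 * k - 1) ≠ 0 := pow_ne_zero _ hnne
      field_simp
      rw [Nat.add_sub_cancel]
    calc ((E.card.choose (k - 1) : ℝ)) * ((T.card : ℝ) * (1 - q) ^ N)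
        ≤ (E.card : ℝ) ^ (k - 1) * ((T.card : ℝ) * (1 / (n : ℝ) ^ (2 * k))) := step1
      _ = ((E.card : ℝ) ^ (k - 1) * (T.card : ℝ)) * (1 / (n : ℝ) ^ (2 * k)) := by ring
      _ ≤ (n : ℝ) ^ (2 * k - 1) * (1 / (n : ℝ) ^ (2 * k)) := step3
      _ = 1 / n := step4
  have hGoodC : μ Goodᶜ ≤ ENNReal.ofReal (1 / n) := by
    refine hUB.trans ?_
    have hconv : ((E.powersetCard (k - 1)).card : ENNReal)
        * ((T.card : ENNReal) * ENNReal.ofReal ((1 - q) ^ N))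
        = ENNReal.ofReal (((E.card.choose (k - 1) : ℝ)) * ((T.card : ℝ) * (1 - q) ^ N)) := by
      rw [Finset.card_powersetCard,
        ← ENNReal.ofReal_natCast (E.card.choose (k - 1)),
        ← ENNReal.ofReal_natCast T.card,
        ← ENNReal.ofReal_mul (Nat.cast_nonneg _),
        ← ENNReal.ofReal_mul (Nat.cast_nonneg _)]
    rw [hconv]
    exact ENNReal.ofReal_le_ofReal hreal
  -- assemble
  calc ENNReal.ofReal (1 - 1 / (n : ℝ))
      ≤ 1 - μ Goodᶜ := by
        apply ENNReal.le_sub_of_add_le_right (measure_ne_top μ _)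
        calc ENNReal.ofReal (1 - 1 / (n : ℝ)) + μ Goodᶜ
            ≤ ENNReal.ofReal (1 - 1 / (n : ℝ)) + ENNReal.ofReal (1 / n) :=
              by gcongr
          _ = ENNReal.ofReal 1 := by
              rw [← ENNReal.ofReal_add h1n1 h1n0]; norm_num
          _ = 1 := ENNReal.ofReal_one
    _ ≤ μ Good := by
        rw [tsub_le_iff_right]
        calc (1 : ENNReal) = μ Set.univ := measure_univ.symm
          _ = μ (Good ∪ Goodᶜ) := by rw [Set.union_compl_self]
          _ ≤ μ Good + μ Goodᶜ := measure_union_le _ _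
    _ ≤ _ := measure_mono hGG
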